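/- arXiv:2109.00613 — 2 statements merged into one kernel-verified Lean document; each statement's English description precedes it below -/
import Mathlib

section
/- Let q ≥ 3 and let n, w, D be natural numbers with w ≤ n. If C is a set of words of length n and weight w over Fin q such that any two distinct members have Hamming distance at least D+1, and A is a set of words of length n and weight w over Fin q such that any two members have Hamming distance at most D, then |C| · |A| ≤ C(n,w) · (q−1)^w. -/
open MulAction Equiv Finset

set_option maxHeartbeats 1000000
set_option synthInstance.maxHeartbeats 200000

def wt {n q : ℕ} (x : Fin n → Fin q) : ℕ :=
  (Finset.univ.filter fun i => (x i : ℕ) ≠ 0).card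

section
variable (n q : ℕ) [NeZero q]

lemma fin_val_eq_zero_iff {q : ℕ} [NeZero q] (a : Fin q) : (a:ℕ) = 0 ↔ a = 0 := by
  rw [Fin.ext_iff, Fin.val_zero]

abbrev S0 : Subgroup (Equiv.Perm (Fin q)) := MulAction.stabilizer (Equiv.Perm (Fin q)) (0 : Fin q)

def phi : Equiv.Perm (Fin n) →* MulAut (Fin n → S0 q) where
  toFun σ :=
    { toFun := fun π i => π (σ⁻¹ i)
      invFun := fun π i => π (σ i)
      left_inv := fun π => by ext i; simp
      right_inv := fun π => by ext i; simp
      map_mul' := fun π₁ π₂ => rfl }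
  map_one' := by ext π i; simp
  map_mul' := fun σ₁ σ₂ => by ext π i; simp [mul_comm]

abbrev W := (Fin n → S0 q) ⋊[phi n q] Equiv.Perm (Fin n)

noncomputable instance : Fintype (W n q) :=
  Fintype.ofEquiv ((Fin n → S0 q) × Equiv.Perm (Fin n))
    { toFun := fun p => ⟨p.1, p.2⟩
      invFun := fun g => (g.left, g.right)
      left_inv := fun p => rfl
      right_inv := fun g => rfl }

variable {n q}

def wsmul (g : W n q) (x : Fin n → Fin q) : Fin n → Fin q :=
  fun i => (g.left i : Equiv.Perm (Fin q)) (x (g.right⁻¹ i))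

instance instWAct : MulAction (W n q) (Fin n → Fin q) where
  smul := wsmul
  one_smul x := funext fun i => by show wsmul 1 x i = x i; simp [wsmul]
  mul_smul g h x := funext fun i => by
    show wsmul (g*h) x i = wsmul g (wsmul h x) i
    simp [wsmul, SemidirectProduct.mul_left, SemidirectProduct.mul_right, phi, mul_inv_rev]

lemma wsmul_apply (g : W n q) (x : Fin n → Fin q) (i : Fin n) :
    (g • x) i = (g.left i : Equiv.Perm (Fin q)) (x (g.right⁻¹ i)) := rfl

lemma S0_zero_iff (g : W n q) (i : Fin n) (a : Fin q) :
    (g.left i : Equiv.Perm (Fin q)) a = 0 ↔ a = 0 := by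
  have h0 : (g.left i : Equiv.Perm (Fin q)) 0 = 0 := (g.left i).2
  constructor
  · intro h; exact (g.left i : Equiv.Perm (Fin q)).injective (h.trans h0.symm)
  · rintro rfl; exact h0

lemma card_filter_perm (σ : Equiv.Perm (Fin n)) (P : Fin n → Prop) [DecidablePred P] :
    (univ.filter fun i => P (σ⁻¹ i)).card = (univ.filter P).card := by
  rw [show (univ.filter fun i => P (σ⁻¹ i)) = (univ.filter P).image σ by
    ext j
    simp only [mem_image, mem_filter, mem_univ, true_and]
    constructor
    · intro h; exact ⟨σ⁻¹ j, h, by simp⟩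
    · rintro ⟨i, hi, rfl⟩; simpa using hi]
  exact card_image_of_injective _ σ.injective

lemma wt_wsmul (g : W n q) (x : Fin n → Fin q) : wt (g • x) = wt x := by
  unfold wt
  rw [show (univ.filter fun i => (((g • x) i : Fin q) : ℕ) ≠ 0)
      = (univ.filter fun i => ((x (g.right⁻¹ i) : Fin q) : ℕ) ≠ 0) from
    filter_congr fun i _ => by
      simp only [wsmul_apply, ne_eq, fin_val_eq_zero_iff, S0_zero_iff]]
  exact card_filter_perm g.right (fun i => ((x i : Fin q) : ℕ) ≠ 0)

lemma hammingDist_wsmul (g : W n q) (x y : Fin n → Fin q) :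
    hammingDist (g • x) (g • y) = hammingDist x y := by
  unfold hammingDist
  rw [show (univ.filter fun i => (g • x) i ≠ (g • y) i)
      = (univ.filter fun i => x (g.right⁻¹ i) ≠ y (g.right⁻¹ i)) from
    filter_congr fun i _ => by
      simp only [wsmul_apply, ne_eq, EmbeddingLike.apply_eq_iff_eq]]
  exact card_filter_perm g.right (fun i => x i ≠ y i)

/-- transitivity on words of equal weight -/
lemma exists_wsmul_eq {x y : Fin n → Fin q} (h : wt x = wt y) : ∃ g : W n q, g • x = y := by
  classical
  set sx := univ.filter fun i => ((x i : Fin q) : ℕ) ≠ 0 with hsx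
  set sy := univ.filter fun i => ((y i : Fin q) : ℕ) ≠ 0 with hsy
  have hcard : sx.card = sy.card := h
  have hcardc : sxᶜ.card = syᶜ.card := by
    simp [card_compl, hcard]
  let e : {i // i ∈ sx} ≃ {i // i ∈ sy} := sx.equivOfCardEq hcard
  let e' : {i // i ∈ sxᶜ} ≃ {i // i ∈ syᶜ} := sxᶜ.equivOfCardEq hcardc
  let e'' : {i // i ∈ sx} ⊕ {i // i ∈ sxᶜ} ≃ {i // i ∈ sx} ⊕ {i // ¬ i ∈ sx} :=
    Equiv.sumCongr (Equiv.refl _) (Equiv.subtypeEquivRight fun i => by simp)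
  let f'' : {i // i ∈ sy} ⊕ {i // i ∈ syᶜ} ≃ {i // i ∈ sy} ⊕ {i // ¬ i ∈ sy} :=
    Equiv.sumCongr (Equiv.refl _) (Equiv.subtypeEquivRight fun i => by simp)
  let σ : Equiv.Perm (Fin n) :=
    (((Equiv.sumCompl (· ∈ sx)).symm.trans e''.symm).trans
      ((e.sumCongr e').trans (f''.trans (Equiv.sumCompl (· ∈ sy)))))
  have hσ : ∀ j, j ∈ sx → σ j ∈ sy := by
    intro j hj
    simp only [σ, e'', f'', Equiv.trans_apply, Equiv.sumCompl_symm_apply_of_pos hj,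
      Equiv.sumCongr_apply, Equiv.symm_symm, Sum.map_inl, Equiv.sumCompl_apply_inl,
      Equiv.refl_symm, Equiv.refl_apply, Equiv.coe_refl, id_eq]
    exact (e ⟨j, hj⟩).2
  have hσ' : ∀ j, j ∉ sx → σ j ∉ sy := by
    intro j hj
    simp only [σ, e'', f'', Equiv.trans_apply, Equiv.sumCompl_symm_apply_of_neg hj,
      Equiv.sumCongr_symm, Equiv.sumCongr_apply, Equiv.symm_symm, Sum.map_inr, Equiv.sumCompl_apply_inr,
      Equiv.refl_symm, Equiv.refl_apply, Equiv.coe_refl, id_eq]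
    intro hmem
    have h2 := ((Equiv.subtypeEquivRight (p := (· ∈ syᶜ)) (q := (¬ · ∈ sy)) fun i => by simp)
      (e' ((Equiv.subtypeEquivRight (p := (¬ · ∈ sx)) (q := (· ∈ sxᶜ)) fun i => by simp) ⟨j, hj⟩))).2
    exact h2 hmem
  have key : ∀ i, i ∈ sy ↔ σ⁻¹ i ∈ sx := by
    intro i
    constructor
    · intro hi; by_contra hns
      exact hσ' _ hns (by simpa using hi)
    · intro hs
      have := hσ _ hs; simpa using this
  refine ⟨⟨fun i => if hi : i ∈ sy then
      ⟨Equiv.swap (x (σ⁻¹ i)) (y i), ?_⟩ else 1, σ⟩, ?_⟩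
  · -- swap fixes 0
    have hx0 : x (σ⁻¹ i) ≠ 0 := by
      have := (key i).1 hi
      simp only [hsx, mem_filter, mem_univ, true_and, ne_eq] at this
      simpa [fin_val_eq_zero_iff] using this
    have hy0 : y i ≠ 0 := by
      simp only [hsy, mem_filter, mem_univ, true_and, ne_eq] at hi
      simpa [fin_val_eq_zero_iff] using hi
    show Equiv.swap (x (σ⁻¹ i)) (y i) • (0:Fin q) = 0
    rw [Equiv.Perm.smul_def]
    exact Equiv.swap_apply_of_ne_of_ne (Ne.symm hx0) (Ne.symm hy0)
  · funext i
    rw [wsmul_apply]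
    simp only [SemidirectProduct.left, SemidirectProduct.right]
    by_cases hi : i ∈ sy
    · simp only [dif_pos hi]
      exact Equiv.swap_apply_left _ _
    · simp only [dif_neg hi]
      have hx0 : x (σ⁻¹ i) = 0 := by
        have h1 : σ⁻¹ i ∉ sx := fun hs => hi ((key i).2 hs)
        simp only [hsx, mem_filter, mem_univ, true_and, not_not, ne_eq] at h1
        simpa [fin_val_eq_zero_iff] using h1
      have hy0 : y i = 0 := by
        simp only [hsy, mem_filter, mem_univ, true_and, not_not, ne_eq] at hi
        simpa [fin_val_eq_zero_iff] using hi
      rw [hx0, hy0]; rfl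

/-- counting the Johnson space -/
lemma card_Jq (w : ℕ) (hw : w ≤ n) :
    ((univ : Finset (Fin n → Fin q)).filter fun x => wt x = w).card
      = Nat.choose n w * (q - 1) ^ w := by
  classical
  rw [card_eq_sum_card_fiberwise (f := fun x => univ.filter fun i => ((x i : Fin q) : ℕ) ≠ 0)
    (t := univ.powersetCard w) (fun x hx => by
      simp only [mem_coe, mem_filter, mem_univ, true_and] at hx
      rw [mem_coe, mem_powersetCard]
      exact ⟨subset_univ _, hx⟩)]
  have hfib : ∀ S ∈ univ.powersetCard w,
      ((univ.filter fun x : Fin n → Fin q => wt x = w).filter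
        fun x => (univ.filter fun i => ((x i : Fin q) : ℕ) ≠ 0) = S).card = (q-1)^w := by
    intro S hS
    rw [mem_powersetCard] at hS
    have hpi : ((univ.filter fun x : Fin n → Fin q => wt x = w).filter
        fun x => (univ.filter fun i => ((x i : Fin q) : ℕ) ≠ 0) = S)
        = Fintype.piFinset (fun i => if i ∈ S then univ.filter (fun a : Fin q => (a:ℕ) ≠ 0) else {0}) := by
      ext x
      simp only [mem_filter, mem_univ, true_and, Fintype.mem_piFinset]
      constructor
      · rintro ⟨-, rfl⟩ i
        by_cases hi : ((x i : Fin q) : ℕ) ≠ 0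
        · simp [hi, (fin_val_eq_zero_iff (x i)).not.mp hi]
        · rw [if_neg (by simpa using hi), mem_singleton, ← fin_val_eq_zero_iff]
          simpa using hi
      · intro hx
        have hsupp : (univ.filter fun i => ((x i : Fin q) : ℕ) ≠ 0) = S := by
          ext i
          simp only [mem_filter, mem_univ, true_and]
          constructor
          · intro hxi
            by_contra hiS
            have h3 := hx i; rw [if_neg hiS] at h3
            simp only [mem_singleton] at h3
            exact hxi (by simp [h3])
          · intro hiS
            have h3 := hx i; rw [if_pos hiS] at h3
            simpa using h3
        exact ⟨by rw [wt, hsupp, hS.2], hsupp⟩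
    rw [hpi, Fintype.card_piFinset]
    have hcardnz : (univ.filter fun a : Fin q => (a:ℕ) ≠ 0).card = q - 1 := by
      rw [show (univ.filter fun a : Fin q => (a:ℕ) ≠ 0) = univ.erase 0 by
        ext a; simp [fin_val_eq_zero_iff, eq_comm]]
      simp [card_erase_of_mem]
    have hprod : ∏ i : Fin n, (if i ∈ S then univ.filter (fun a : Fin q => (a:ℕ) ≠ 0) else {0}).card
        = ∏ i : Fin n, (if i ∈ S then q - 1 else 1) :=
      Finset.prod_congr rfl fun i _ => by
        by_cases hi : i ∈ S <;> simp [hi, hcardnz] <;> simpa using hcardnz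
    rw [hprod, Finset.prod_ite_mem univ S (fun _ => q - 1), univ_inter, prod_const, hS.2]
  rw [Finset.sum_congr rfl hfib, sum_const, card_powersetCard, card_univ, Fintype.card_fin,
    smul_eq_mul]
end


/-- Code-anticode bound for J_q(n,w): if the code `C` has minimum Hamming
distance at least `D+1` and the anticode `A` has Hamming diameter at most `D`,
both consisting of words of length `n` and weight `w` over `Fin q`, `q ≥ 3`,
then `|C| * |A| ≤ C(n,w) * (q-1)^w`. -/
theorem code_anticode_Jq (q n w D : ℕ) (hq : 3 ≤ q) (hw : w ≤ n)
    (C A : Finset (Fin n → Fin q))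
    (hC : ∀ c ∈ C, wt c = w) (hA : ∀ a ∈ A, wt a = w)
    (hCdist : ∀ c₁ ∈ C, ∀ c₂ ∈ C, c₁ ≠ c₂ → D + 1 ≤ hammingDist c₁ c₂)
    (hAdiam : ∀ a₁ ∈ A, ∀ a₂ ∈ A, hammingDist a₁ a₂ ≤ D) :
    C.card * A.card ≤ Nat.choose n w * (q - 1) ^ w := by
  haveI : NeZero q := ⟨by omega⟩
  classical
  rcases C.eq_empty_or_nonempty with rfl | ⟨c₀, hc₀⟩
  · simp
  rcases A.eq_empty_or_nonempty with rfl | ⟨a₀, ha₀⟩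
  · simp
  set K := (Finset.univ.filter fun g : W n q => g • a₀ = a₀).card with hK
  -- each pair fiber has size K
  have hfiber : ∀ c a : Fin n → Fin q, wt c = w → wt a = w →
      (Finset.univ.filter fun g : W n q => g • a = c).card = K := by
    intro c a hcw haw
    obtain ⟨g₁, hg₁⟩ := exists_wsmul_eq (x := a₀) (y := a) ((hA a₀ ha₀).trans haw.symm)
    obtain ⟨g₂, hg₂⟩ := exists_wsmul_eq (x := a₀) (y := c) ((hA a₀ ha₀).trans hcw.symm)
    rw [hK]
    have ha₀a : g₁⁻¹ • a = a₀ := by rw [← hg₁, inv_smul_smul]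
    apply Finset.card_bij' (fun g _ => g₂⁻¹ * g * g₁) (fun s _ => g₂ * s * g₁⁻¹)
    · intro g hg
      simp only [Finset.mem_filter, Finset.mem_univ, true_and] at hg ⊢
      rw [mul_smul, mul_smul, hg₁, hg, ← hg₂, inv_smul_smul]
    · intro s hs
      simp only [Finset.mem_filter, Finset.mem_univ, true_and] at hs ⊢
      rw [mul_smul, mul_smul, ha₀a, hs, hg₂]
    · intro g _; group
    · intro s _; group
  have hsum : ∑ p ∈ C ×ˢ A, (Finset.univ.filter fun g : W n q => g • p.2 = p.1).card
      = C.card * A.card * K := by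
    have h1 : ∀ p ∈ C ×ˢ A,
        (Finset.univ.filter fun g : W n q => g • p.2 = p.1).card = K := fun p hp => by
      rw [Finset.mem_product] at hp
      exact hfiber p.1 p.2 (hC _ hp.1) (hA _ hp.2)
    rw [Finset.sum_congr rfl h1, Finset.sum_const, Finset.card_product, smul_eq_mul]
  -- fibers are pairwise disjoint, so the sum is at most |W|
  have hdisj : ∀ p₁ ∈ C ×ˢ A, ∀ p₂ ∈ C ×ˢ A, p₁ ≠ p₂ →
      Disjoint (Finset.univ.filter fun g : W n q => g • p₁.2 = p₁.1)
        (Finset.univ.filter fun g : W n q => g • p₂.2 = p₂.1) := by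
    intro p₁ hp₁ p₂ hp₂ hne
    rw [Finset.mem_product] at hp₁ hp₂
    rw [Finset.disjoint_left]
    intro g hg₁ hg₂
    simp only [Finset.mem_filter, Finset.mem_univ, true_and] at hg₁ hg₂
    have hceq : p₁.1 = p₂.1 := by
      by_contra hcne
      have hd : D + 1 ≤ hammingDist p₁.1 p₂.1 := hCdist _ hp₁.1 _ hp₂.1 hcne
      rw [← hg₁, ← hg₂, hammingDist_wsmul] at hd
      exact absurd (hAdiam _ hp₁.2 _ hp₂.2) (by omega)
    have haeq : p₁.2 = p₂.2 := by
      apply smul_left_cancel g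
      rw [hg₁, hg₂, hceq]
    exact hne (Prod.ext hceq haeq)
  have hle : ∑ p ∈ C ×ˢ A, (Finset.univ.filter fun g : W n q => g • p.2 = p.1).card
      ≤ Fintype.card (W n q) := by
    rw [← Finset.card_biUnion hdisj]
    simpa using Finset.card_le_card (Finset.subset_univ _)
  -- orbit-stabilizer
  have horb := MulAction.card_orbit_mul_card_stabilizer_eq_card_group (W n q) a₀
  have horbcard : Fintype.card (MulAction.orbit (W n q) a₀)
      = Nat.choose n w * (q - 1) ^ w := by
    rw [← card_Jq (n := n) (q := q) w hw]
    have hset : MulAction.orbit (W n q) a₀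
        = ↑((Finset.univ : Finset (Fin n → Fin q)).filter fun x => wt x = w) := by
      ext y
      simp only [MulAction.mem_orbit_iff, Finset.coe_filter, Set.mem_setOf_eq,
        Finset.mem_univ, true_and]
      constructor
      · rintro ⟨g, rfl⟩; rw [wt_wsmul]; exact hA _ ha₀
      · intro hy
        exact exists_wsmul_eq ((hA _ ha₀).trans hy.symm)
    rw [Fintype.card_congr (Equiv.setCongr hset)]
    simp [Fintype.card_subtype]
  have hstabcard : Fintype.card (MulAction.stabilizer (W n q) a₀) = K := by
    rw [hK, ← Fintype.card_subtype]
    exact Fintype.card_congr (Equiv.subtypeEquivRight fun g => Iff.rfl)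
  have hKpos : 0 < K := by
    rw [hK]
    apply Finset.card_pos.mpr
    exact ⟨1, by simp⟩
  have : C.card * A.card * K ≤ Nat.choose n w * (q - 1) ^ w * K := by
    rw [← hsum]
    calc _ ≤ Fintype.card (W n q) := hle
    _ = _ := by rw [← horb, horbcard, hstabcard]
  exact Nat.le_of_mul_le_mul_right this hKpos
end

section
/- Suppose there exists an (n,w,q) MDS-CW code with q ≥ 3 and 1 ≤ w ≤ n. Then every set A of words of length n and weight w over Fin q in which any two members have Hamming distance at most w−1 satisfies |A| ≤ (q−1)^{w−1}. -/
/-- The support of a word `x : Fin n → Fin q`: the set of nonzero coordinates. -/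
def supp {n q : ℕ} (x : Fin n → Fin q) : Finset (Fin n) :=
  Finset.univ.filter fun i => (x i : ℕ) ≠ 0

/-- `C` is an (n,w,q) MDS-CW code: a constant-weight code of length `n` and
weight `w` over `Fin q` with minimum Hamming distance `w` such that every
`w`-element subset of `Fin n` is the support of exactly `q - 1` codewords. -/
def IsMDSCW (n w q : ℕ) (C : Finset (Fin n → Fin q)) : Prop :=
  (∀ c ∈ C, wt c = w) ∧
  (∀ c₁ ∈ C, ∀ c₂ ∈ C, c₁ ≠ c₂ → w ≤ hammingDist c₁ c₂) ∧
  (∀ S : Finset (Fin n), S.card = w → (C.filter fun c => supp c = S).card = q - 1)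

section Aux

variable {n q : ℕ} [NeZero q]

lemma fin_val_ne_zero (a : Fin q) : (a : ℕ) ≠ 0 ↔ a ≠ 0 := by
  constructor
  · intro h h0; exact h (by simp [h0])
  · intro h h0; exact h (Fin.ext (by simpa using h0))

lemma wt_eq_card_supp (x : Fin n → Fin q) : wt x = (supp x).card := rfl

abbrev GW (n q : ℕ) [NeZero q] : Type :=
  {p : Equiv.Perm (Fin n) × (Fin n → Equiv.Perm (Fin q)) // ∀ i, p.2 i 0 = 0}

def act (g : GW n q) (x : Fin n → Fin q) : Fin n → Fin q :=
  fun i => g.1.2 i (x (g.1.1⁻¹ i))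

def gmul (g h : GW n q) : GW n q :=
  ⟨(g.1.1 * h.1.1, fun i => g.1.2 i * h.1.2 (g.1.1⁻¹ i)), by
    intro i; simp [Equiv.Perm.mul_apply, h.2, g.2]⟩

def ginv (g : GW n q) : GW n q :=
  ⟨(g.1.1⁻¹, fun i => (g.1.2 (g.1.1 i))⁻¹), by
    intro i
    have := g.2 (g.1.1 i)
    simp [Equiv.Perm.inv_eq_iff_eq, Equiv.symm_apply_eq, this]⟩

def gone : GW n q := ⟨(1, fun _ => 1), by intro i; rfl⟩

lemma act_gone (x : Fin n → Fin q) : act (gone : GW n q) x = x := by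
  funext i; simp [act, gone]

lemma act_gmul (g h : GW n q) (x : Fin n → Fin q) :
    act (gmul g h) x = act g (act h x) := by
  funext i; simp [act, gmul, Equiv.Perm.mul_apply]

lemma act_ginv_act (g : GW n q) (x : Fin n → Fin q) :
    act (ginv g) (act g x) = x := by
  funext i; simp [act, ginv]

lemma act_ginv_of {g : GW n q} {x y : Fin n → Fin q} (h : act g x = y) :
    act (ginv g) y = x := by rw [← h, act_ginv_act]

lemma gmul_assoc (g h k : GW n q) : gmul (gmul g h) k = gmul g (gmul h k) := by
  apply Subtype.ext
  apply Prod.ext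
  · simp [gmul, mul_assoc]
  · funext i; simp [gmul, mul_assoc, Equiv.Perm.mul_apply]

lemma ginv_gmul_cancel (g h : GW n q) : gmul (ginv g) (gmul g h) = h := by
  apply Subtype.ext
  apply Prod.ext
  · simp [gmul, ginv, mul_assoc]
  · funext i; apply Equiv.ext; intro v
    simp [gmul, ginv, Equiv.Perm.mul_apply]

lemma gmul_ginv_cancel (g h : GW n q) : gmul g (gmul (ginv g) h) = h := by
  apply Subtype.ext
  apply Prod.ext
  · simp [gmul, ginv, mul_assoc]
  · funext i; apply Equiv.ext; intro v
    simp [gmul, ginv, Equiv.Perm.mul_apply]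

lemma gmul_ginv_cancel_right (g h : GW n q) : gmul (gmul h g) (ginv g) = h := by
  apply Subtype.ext
  apply Prod.ext
  · simp [gmul, ginv, mul_assoc]
  · funext i; apply Equiv.ext; intro v
    simp [gmul, ginv, Equiv.Perm.mul_apply]

lemma ginv_gmul_cancel_right (g h : GW n q) : gmul (gmul h (ginv g)) g = h := by
  apply Subtype.ext
  apply Prod.ext
  · simp [gmul, ginv, mul_assoc]
  · funext i; apply Equiv.ext; intro v
    simp [gmul, ginv, Equiv.Perm.mul_apply]

lemma act_hammingDist (g : GW n q) (x y : Fin n → Fin q) :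
    hammingDist (act g x) (act g y) = hammingDist x y := by
  show (Finset.univ.filter fun i => act g x i ≠ act g y i).card
      = (Finset.univ.filter fun i => x i ≠ y i).card
  apply Finset.card_bij' (fun i _ => g.1.1⁻¹ i) (fun i _ => g.1.1 i)
  · intro i hi
    simp only [Finset.mem_filter, Finset.mem_univ, true_and] at hi ⊢
    intro hxy
    exact hi (by simp only [act, hxy])
  · intro i hi
    simp only [Finset.mem_filter, Finset.mem_univ, true_and] at hi ⊢
    simp [act, (g.1.2 (g.1.1 i)).injective.ne_iff, hi]
  · intro i _; simp
  · intro i _; simp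

lemma act_nonzero_iff (g : GW n q) (x : Fin n → Fin q) (i : Fin n) :
    act g x i ≠ 0 ↔ x (g.1.1⁻¹ i) ≠ 0 := by
  unfold act
  constructor
  · intro h h0; exact h (by rw [h0]; exact g.2 i)
  · intro h h0; exact h ((g.1.2 i).injective (h0.trans (g.2 i).symm))

lemma wt_act (g : GW n q) (x : Fin n → Fin q) : wt (act g x) = wt x := by
  show (Finset.univ.filter fun i => (act g x i : ℕ) ≠ 0).card
      = (Finset.univ.filter fun i => (x i : ℕ) ≠ 0).card
  apply Finset.card_bij' (fun i _ => g.1.1⁻¹ i) (fun i _ => g.1.1 i)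
  · intro i hi
    simp only [Finset.mem_filter, Finset.mem_univ, true_and] at hi ⊢
    rw [fin_val_ne_zero] at hi ⊢
    exact (act_nonzero_iff g x i).mp hi
  · intro i hi
    simp only [Finset.mem_filter, Finset.mem_univ, true_and] at hi ⊢
    rw [fin_val_ne_zero] at hi ⊢
    rw [act_nonzero_iff]
    simpa using hi
  · intro i _; simp
  · intro i _; simp

lemma exists_act (x y : Fin n → Fin q) (hxy : wt x = wt y) :
    ∃ g : GW n q, act g x = y := by
  have hcard : (supp x).card = (supp y).card := hxy
  set S := supp x with hS
  set T := supp y with hT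
  have e : {i // i ∈ S} ≃ {i // i ∈ T} := Finset.equivOfCardEq hcard
  set σ : Equiv.Perm (Fin n) := e.extendSubtype with hσ
  have hmem : ∀ i, i ∈ S → σ i ∈ T := fun i hi => e.extendSubtype_mem i hi
  have hnotmem : ∀ i, i ∉ S → σ i ∉ T := by
    intro i hi hc
    have himg : S.image σ ⊆ T := by
      intro j hj
      obtain ⟨a, ha, rfl⟩ := Finset.mem_image.mp hj
      exact hmem a ha
    have : S.image σ = T := Finset.eq_of_subset_of_card_le himg (by
      rw [Finset.card_image_of_injective _ σ.injective]; omega)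
    rw [← this] at hc
    obtain ⟨a, ha, hae⟩ := Finset.mem_image.mp hc
    exact hi (σ.injective hae ▸ ha)
  have key : ∀ i, (x (σ⁻¹ i) ≠ 0 ↔ y i ≠ 0) := by
    intro i
    have h1 : σ⁻¹ i ∈ S ↔ i ∈ T := by
      constructor
      · intro hi; have := hmem _ hi; simpa using this
      · intro hi; by_contra hc; exact hnotmem _ hc (by simpa using hi)
    have hx : x (σ⁻¹ i) ≠ 0 ↔ σ⁻¹ i ∈ S := by
      rw [hS]; simp [supp, fin_val_ne_zero]
    have hy : y i ≠ 0 ↔ i ∈ T := by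
      rw [hT]; simp [supp, fin_val_ne_zero]
    rw [hx, hy, h1]
  refine ⟨⟨(σ, fun i => Equiv.swap (x (σ⁻¹ i)) (y i)), ?_⟩, ?_⟩
  · intro i
    by_cases hy : y i = 0
    · have hx : x (σ⁻¹ i) = 0 := by
        by_contra hc; exact (key i).mp hc hy
      simp [hx, hy]; simpa using hx
    · have hx : x (σ⁻¹ i) ≠ 0 := (key i).mpr hy
      exact Equiv.swap_apply_of_ne_of_ne (Ne.symm hx) (Ne.symm hy)
  · funext i
    simp [act, Equiv.swap_apply_left]

end Aux

section Aux2

variable {n q : ℕ} [NeZero q]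

lemma mem_supp {x : Fin n → Fin q} {i : Fin n} : i ∈ supp x ↔ (x i : ℕ) ≠ 0 := by
  simp [supp]

lemma card_filter_ne_zero : (Finset.univ.filter fun v : Fin q => (v : ℕ) ≠ 0).card = q - 1 := by
  have h : (Finset.univ.filter fun v : Fin q => (v : ℕ) ≠ 0) = Finset.univ.erase 0 := by
    ext v
    simp [fin_val_ne_zero, Finset.mem_erase, and_comm]
  rw [h, Finset.card_erase_of_mem (Finset.mem_univ _), Finset.card_univ, Fintype.card_fin]

lemma card_supp_eq (S : Finset (Fin n)) :
    (Finset.univ.filter fun x : Fin n → Fin q => supp x = S).card = (q - 1) ^ S.card := by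
  have hset : (Finset.univ.filter fun x : Fin n → Fin q => supp x = S)
      = Fintype.piFinset (fun i => if i ∈ S then (Finset.univ.filter fun v : Fin q => (v : ℕ) ≠ 0) else {0}) := by
    ext x
    simp only [Finset.mem_filter, Finset.mem_univ, true_and, Fintype.mem_piFinset]
    constructor
    · intro hs i
      by_cases hi : i ∈ S
      · have hne : (x i : ℕ) ≠ 0 := mem_supp.mp (hs ▸ hi)
        simp [hi, (fin_val_ne_zero _).mp hne]
      · have hx0' : ¬ (x i : ℕ) ≠ 0 := fun hc => hi (hs ▸ mem_supp.mpr hc)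
        have hx0 : x i = 0 := Fin.ext (by simpa using not_not.mp hx0')
        simp [hi, hx0]
    · intro ht
      ext i
      rw [mem_supp]
      by_cases hi : i ∈ S
      · have h2 := ht i
        simp only [hi, if_true, Finset.mem_filter, Finset.mem_univ, true_and] at h2
        simp [hi, h2]
      · have h2 := ht i
        simp only [hi, if_false, Finset.mem_singleton] at h2
        simp [hi, h2]
  rw [hset, Fintype.card_piFinset]
  have hcongr : ∀ i ∈ Finset.univ, ((if i ∈ S then (Finset.univ.filter fun v : Fin q => (v : ℕ) ≠ 0) else ({0} : Finset (Fin q)))).card = if i ∈ S then q - 1 else 1 := by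
    intro i _
    by_cases hi : i ∈ S <;> simp only [hi, ↓reduceIte, card_filter_ne_zero, Finset.card_singleton]
  rw [Finset.prod_congr rfl hcongr]
  rw [← Finset.prod_subset S.subset_univ (fun i _ hi => if_neg hi)]
  rw [Finset.prod_congr rfl (fun i hi => if_pos hi), Finset.prod_const]

end Aux2

/-- If an (n,w,q) MDS-CW code exists, then every anticode of words of length
`n` and weight `w` over `Fin q` with Hamming diameter at most `w - 1` has size
at most `(q-1)^(w-1)`. -/
theorem mdscw_max_anticode (n w q : ℕ) (hq : 3 ≤ q) (hw1 : 1 ≤ w) (hw : w ≤ n)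
    (h : ∃ C : Finset (Fin n → Fin q), IsMDSCW n w q C)
    (A : Finset (Fin n → Fin q)) (hA : ∀ a ∈ A, wt a = w)
    (hAdiam : ∀ a₁ ∈ A, ∀ a₂ ∈ A, hammingDist a₁ a₂ ≤ w - 1) :
    A.card ≤ (q - 1) ^ (w - 1) := by
  haveI : NeZero q := ⟨by omega⟩
  obtain ⟨C, hCw, hCd, hCS⟩ := h
  -- pick a reference codeword x₀
  obtain ⟨S₀, -, hS₀⟩ := Finset.exists_subset_card_eq
    (show w ≤ (Finset.univ : Finset (Fin n)).card by simpa using hw)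
  have hfib := hCS S₀ hS₀
  have hpos : 0 < (C.filter fun c => supp c = S₀).card := by omega
  obtain ⟨x₀, hx₀⟩ := Finset.card_pos.mp hpos
  have hx₀C : x₀ ∈ C := (Finset.mem_filter.mp hx₀).1
  have hx₀w : wt x₀ = w := hCw x₀ hx₀C
  set s := (Finset.univ.filter fun g : GW n q => act g x₀ = x₀).card with hs
  have hs1 : 1 ≤ s := Finset.card_pos.mpr ⟨gone, by simp [act_gone]⟩
  -- all transporter sets between weight-w words have cardinality s
  have t_eq : ∀ c a : Fin n → Fin q, wt c = w → wt a = w →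
      (Finset.univ.filter fun g : GW n q => act g c = a).card = s := by
    intro c a hc ha
    obtain ⟨h₁, hh₁⟩ := exists_act x₀ c (by rw [hx₀w, hc])
    obtain ⟨k₁, hk₁⟩ := exists_act x₀ a (by rw [hx₀w, ha])
    rw [hs]
    apply Finset.card_bij' (fun g _ => gmul (ginv k₁) (gmul g h₁))
      (fun u _ => gmul k₁ (gmul u (ginv h₁)))
    · intro g hg
      simp only [Finset.mem_filter, Finset.mem_univ, true_and] at hg ⊢
      rw [act_gmul, act_gmul, hh₁, hg, ← hk₁, act_ginv_act]
    · intro u hu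
      simp only [Finset.mem_filter, Finset.mem_univ, true_and] at hu ⊢
      rw [act_gmul, act_gmul, act_ginv_of hh₁, hu, hk₁]
    · intro g _
      rw [gmul_assoc, gmul_ginv_cancel, gmul_ginv_cancel_right]
    · intro u _
      rw [gmul_assoc, ginv_gmul_cancel, ginv_gmul_cancel_right]
  -- each translate of C meets A at most once
  have perg : ∀ g : GW n q, (C.filter fun c => act g c ∈ A).card ≤ 1 := by
    intro g
    apply Finset.card_le_one.mpr
    intro c₁ h₁ c₂ h₂
    simp only [Finset.mem_filter] at h₁ h₂
    by_contra hne
    have hd := hCd c₁ h₁.1 c₂ h₂.1 hne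
    have hd2 := hAdiam _ h₁.2 _ h₂.2
    rw [act_hammingDist] at hd2
    omega
  -- the double count
  set X := Finset.univ.filter fun x : Fin n → Fin q => wt x = w with hX
  have P1 : (∑ c ∈ C, ∑ a ∈ A, (Finset.univ.filter fun g : GW n q => act g c = a).card)
      = C.card * A.card * s := by
    rw [Finset.sum_congr rfl (fun c hc => Finset.sum_congr rfl
      (fun a ha => t_eq c a (hCw c hc) (hA a ha)))]
    simp [mul_assoc]
  have P2 : (∑ c ∈ C, ∑ a ∈ A, (Finset.univ.filter fun g : GW n q => act g c = a).card)
      ≤ Fintype.card (GW n q) := by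
    have step1 : ∀ c : Fin n → Fin q,
        (∑ a ∈ A, (Finset.univ.filter fun g : GW n q => act g c = a).card)
        = ∑ g : GW n q, if act g c ∈ A then 1 else 0 := by
      intro c
      calc (∑ a ∈ A, (Finset.univ.filter fun g : GW n q => act g c = a).card)
          = ∑ a ∈ A, ∑ g : GW n q, if act g c = a then 1 else 0 := by
            refine Finset.sum_congr rfl fun a _ => ?_
            rw [Finset.card_filter]
        _ = ∑ g : GW n q, ∑ a ∈ A, if act g c = a then 1 else 0 := Finset.sum_comm
        _ = ∑ g : GW n q, if act g c ∈ A then 1 else 0 := by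
            refine Finset.sum_congr rfl fun g _ => ?_
            exact Finset.sum_ite_eq A (act g c) (fun _ => 1)
    calc (∑ c ∈ C, ∑ a ∈ A, (Finset.univ.filter fun g : GW n q => act g c = a).card)
        = ∑ c ∈ C, ∑ g : GW n q, if act g c ∈ A then 1 else 0 := by
          exact Finset.sum_congr rfl fun c _ => step1 c
      _ = ∑ g : GW n q, ∑ c ∈ C, if act g c ∈ A then 1 else 0 := Finset.sum_comm
      _ = ∑ g : GW n q, (C.filter fun c => act g c ∈ A).card := by
          refine Finset.sum_congr rfl fun g _ => ?_
          rw [Finset.card_filter]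
      _ ≤ ∑ _g : GW n q, 1 := Finset.sum_le_sum fun g _ => perg g
      _ = Fintype.card (GW n q) := by simp
  have P3 : Fintype.card (GW n q) = X.card * s := by
    have hfw : ∀ g : GW n q, g ∈ Finset.univ → act g x₀ ∈ X := by
      intro g _
      rw [hX]
      simp [wt_act, hx₀w]
    have := Finset.card_eq_sum_card_fiberwise hfw
    rw [← Finset.card_univ, this,
      Finset.sum_congr rfl (fun x hx => t_eq x₀ x hx₀w (by rw [hX] at hx; simpa using hx))]
    simp [mul_comm]
  have hCA : C.card * A.card ≤ X.card := by
    have := P1 ▸ P2.trans_eq P3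
    exact Nat.le_of_mul_le_mul_right this (by omega)
  -- cardinality of C
  have hsuppmem : ∀ c ∈ C, supp c ∈ Finset.univ.powersetCard w := by
    intro c hc
    rw [Finset.mem_powersetCard]
    exact ⟨Finset.subset_univ _, by rw [← wt_eq_card_supp]; exact hCw c hc⟩
  have hN : (Finset.univ.powersetCard w : Finset (Finset (Fin n))).card = Nat.choose n w := by
    rw [Finset.card_powersetCard, Finset.card_univ, Fintype.card_fin]
  have hC_card : C.card = Nat.choose n w * (q - 1) := by
    rw [Finset.card_eq_sum_card_fiberwise hsuppmem,
      Finset.sum_congr rfl (fun S hS => hCS S (Finset.mem_powersetCard.mp hS).2)]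
    simp [hN, mul_comm]
  -- cardinality of X
  have hX_card : X.card = Nat.choose n w * (q - 1) ^ w := by
    have hmem : ∀ x ∈ X, supp x ∈ Finset.univ.powersetCard w := by
      intro x hx
      rw [hX] at hx
      rw [Finset.mem_powersetCard]
      exact ⟨Finset.subset_univ _, by rw [← wt_eq_card_supp]; simpa using hx⟩
    have fib : ∀ S ∈ (Finset.univ.powersetCard w : Finset (Finset (Fin n))),
        (X.filter fun x => supp x = S).card = (q - 1) ^ w := by
      intro S hS
      obtain ⟨-, hScard⟩ := Finset.mem_powersetCard.mp hS
      have : X.filter (fun x => supp x = S)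
          = Finset.univ.filter fun x : Fin n → Fin q => supp x = S := by
        rw [hX, Finset.filter_filter]
        refine Finset.filter_congr fun x _ => ?_
        constructor
        · exact fun hx => hx.2
        · intro hx
          refine ⟨?_, hx⟩
          rw [wt_eq_card_supp, hx, hScard]
      rw [this, card_supp_eq, hScard]
    rw [Finset.card_eq_sum_card_fiberwise hmem, Finset.sum_congr rfl fib]
    simp [hN, mul_comm]
  -- conclude
  rw [hC_card, hX_card] at hCA
  have hsplit : (q - 1) ^ w = (q - 1) * (q - 1) ^ (w - 1) := by
    rw [← pow_succ']
    congr 1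
    omega
  have hfin : (Nat.choose n w * (q - 1)) * A.card
      ≤ (Nat.choose n w * (q - 1)) * (q - 1) ^ (w - 1) := by
    calc (Nat.choose n w * (q - 1)) * A.card ≤ Nat.choose n w * (q - 1) ^ w := hCA
      _ = (Nat.choose n w * (q - 1)) * (q - 1) ^ (w - 1) := by rw [hsplit, mul_assoc]
  have hNpos : 0 < Nat.choose n w := Nat.choose_pos hw
  exact Nat.le_of_mul_le_mul_left hfin (Nat.mul_pos hNpos (by omega))
end
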